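/- Let α be a countable ordinal, let X_α be the completion of c₀₀ under ‖·‖_{S_α}, and let (e_k) be its unit vector basis. If (x_i)_{i=1}^p is a normalized block basis of (e_k) and k_i = max supp x_i for 1 ≤ i ≤ p, then ‖Σ_{i=1}^p a_i x_i‖ ≤ ‖Σ_{i=1}^p a_i e_{k_i}‖ for all scalars (a_i). -/

import Mathlib

open Ordinal Filter Topology

namespace LTIndex

/-- `E < F` for finite sets: `max E < min F` (with `max ∅ = 0`, `min ∅ = ∞`),
equivalently every element of `E` is less than every element of `F`. -/
def finLT (E F : Finset ℕ) : Prop := ∀ a ∈ E, ∀ b ∈ F, a < b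

/-- `min E` (junk value `0` when `E = ∅`). -/
noncomputable def minOf (E : Finset ℕ) : ℕ := sInf (E : Set ℕ)

/-- `{E₁, …, E_n}` is `𝓕`-admissible: the `Eᵢ` are nonempty, `E₁ < ⋯ < E_n`
and `{min E₁, …, min E_n} ∈ 𝓕`. -/
def IsAdmissible (𝓕 : Set (Finset ℕ)) (l : List (Finset ℕ)) : Prop :=
  (∀ E ∈ l, E.Nonempty) ∧ l.Chain' finLT ∧ (l.map minOf).toFinset ∈ 𝓕

/-- `𝓜[𝓝]`. -/
def famComp (M N : Set (Finset ℕ)) : Set (Finset ℕ) :=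
  {F | ∃ l : List (Finset ℕ), IsAdmissible M l ∧ (∀ E ∈ l, E ∈ N) ∧
    F = l.foldr (· ∪ ·) ∅}

/-- `(𝓜, 𝓝) = {M ∪ N : M < N, M ∈ 𝓜, N ∈ 𝓝}`. -/
def pairFam (M N : Set (Finset ℕ)) : Set (Finset ℕ) :=
  {F | ∃ A ∈ M, ∃ B ∈ N, finLT A B ∧ F = A ∪ B}

/-- `𝓜² = (𝓜, 𝓜)`. -/
def sqFam (M : Set (Finset ℕ)) : Set (Finset ℕ) := pairFam M M

/-- `S₀ = {{n} : n ∈ ℕ} ∪ {∅}`. -/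
def schreierZero : Set (Finset ℕ) := {F : Finset ℕ | F.card ≤ 1}

/-- `S₁ = {F : |F| ≤ min F}`. -/
noncomputable def schreierOne : Set (Finset ℕ) := {F : Finset ℕ | F.card ≤ minOf F}

/-- A ladder system: for every countable limit ordinal `o`, `seq o` is a strictly
increasing sequence of ordinals below `o` with supremum `o`. -/
def IsCtblLadder (seq : Ordinal.{0} → ℕ → Ordinal.{0}) : Prop :=
  ∀ o : Ordinal, o.card ≤ Cardinal.aleph0 → Order.IsSuccLimit o →
    StrictMono (seq o) ∧ (∀ n : ℕ, seq o n < o) ∧ (⨆ n : ℕ, seq o n) = o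

/-- The Schreier classes `S_α`, relative to a choice `seq` of ladders at limit
ordinals: `S₀` is the singletons together with `∅`, `S_{α+1} = S₁[S_α]`, and at a
limit `α` (with ladder `(α_n) = seq α`), `S_α = {F : F ∈ S_{α_n} for some n ≤ |F|}`. -/
noncomputable def schreier (seq : Ordinal.{0} → ℕ → Ordinal.{0}) (o : Ordinal.{0}) :
    Set (Finset ℕ) :=
  Ordinal.limitRecOn (motive := fun _ => Set (Finset ℕ)) o schreierZero
    (fun _ S => famComp schreierOne S)
    (fun o _ ih => {F | ∃ n : ℕ, n ≤ F.card ∧ ∃ h : seq o n < o, F ∈ ih (seq o n) h})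

/-- `σ_F(x) = ∑_{n ∈ F} |x n|`. -/
noncomputable def sigmaF (F : Finset ℕ) (x : ℕ →₀ ℝ) : ℝ := ∑ n ∈ F, |x n|

/-- `‖x‖_𝓕 = sup_{F ∈ 𝓕} σ_F(x)`. -/
noncomputable def famNorm (𝓕 : Set (Finset ℕ)) (x : ℕ →₀ ℝ) : ℝ :=
  sSup {r : ℝ | ∃ F ∈ 𝓕, r = sigmaF F x}

/-- `E x`: the coordinate restriction of `x` to `E`. -/
noncomputable def restr (E : Finset ℕ) (x : ℕ →₀ ℝ) : ℕ →₀ ℝ :=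
  Finsupp.filter (· ∈ E) x

/-- The norms `‖·‖_n` (when `Sadm = S_β`), resp. `‖·‖′_n` (when `Sadm = (S_β)²`):
`‖·‖₀ = ‖·‖_{S_α}` and
`‖x‖_{n+1} = max{‖x‖_n, sup{(1/2)∑ᵢ ‖Eᵢx‖_n : {E₁,…,E_j} Sadm-admissible}}`. -/
noncomputable def normSeq (Sa Sadm : Set (Finset ℕ)) : ℕ → (ℕ →₀ ℝ) → ℝ
  | 0, x => famNorm Sa x
  | n + 1, x =>
      max (normSeq Sa Sadm n x)
        (sSup {r : ℝ | ∃ l : List (Finset ℕ), IsAdmissible Sadm l ∧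
          r = (1 / 2) * ((l.map fun E => normSeq Sa Sadm n (restr E x)).sum)})

/-- `‖x‖_{T̃}` (resp. `‖x‖_{T̈}`): the limit (= supremum, the sequence being
nondecreasing) of the norms `‖x‖_n` (resp. `‖x‖′_n`). -/
noncomputable def tnorm (Sa Sadm : Set (Finset ℕ)) (x : ℕ →₀ ℝ) : ℝ :=
  ⨆ n : ℕ, normSeq Sa Sadm n x

/-- The families `𝓕_n` (with `Sadm = S_β`), resp. `𝓕′_n` (with `Sadm = (S_β)²`):
`𝓕₀ = S_α`, `𝓕_{n+1} = Sadm[𝓕_n]`. -/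
def famF (Sa Sadm : Set (Finset ℕ)) : ℕ → Set (Finset ℕ)
  | 0 => Sa
  | n + 1 => famComp Sadm (famF Sa Sadm n)

/-- The families `𝓖_n` (with `Sadm = S_β`), resp. `𝓖′_n` (with `Sadm = (S_β)²`),
reindexed: `famG Sadm n = 𝓖_{n+1}`, i.e. `famG Sadm 0 = 𝓖₁ = Sadm` and
`𝓖_{n+2} = Sadm[𝓖_{n+1}]`. -/
def famG (Sadm : Set (Finset ℕ)) : ℕ → Set (Finset ℕ)
  | 0 => Sadm
  | n + 1 => famComp Sadm (famG Sadm n)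

/-- Hereditary family. -/
def Hereditary (𝓕 : Set (Finset ℕ)) : Prop := ∀ A ∈ 𝓕, ∀ B ⊆ A, B ∈ 𝓕

/-- Spreading family. -/
def Spreading (𝓕 : Set (Finset ℕ)) : Prop :=
  ∀ A ∈ 𝓕, ∀ g : ℕ → ℕ, StrictMonoOn g (A : Set ℕ) → (∀ a ∈ A, a ≤ g a) →
    A.image g ∈ 𝓕

/-- Compactness of a family of finite sets, viewed inside `2^ℕ` (ℕ → Bool with the
product topology) via characteristic functions. -/
def CompactFam (𝓕 : Set (Finset ℕ)) : Prop :=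
  IsCompact ((fun A : Finset ℕ => fun n : ℕ => decide (n ∈ A)) '' 𝓕)

/-- Regular family: hereditary, spreading and compact. -/
def RegularFam (𝓕 : Set (Finset ℕ)) : Prop :=
  Hereditary 𝓕 ∧ Spreading 𝓕 ∧ CompactFam 𝓕

/-- The Cantor–Bendixson derivative of a family of finite subsets of ℕ: the set of
its limit points in the product topology of `2^ℕ` (a basic neighbourhood of `A` is
determined by an agreement of initial segments). -/
def famDeriv (𝓕 : Set (Finset ℕ)) : Set (Finset ℕ) :=
  {A | ∀ m : ℕ, ∃ B ∈ 𝓕, B ≠ A ∧ B.filter (· ≤ m) = A.filter (· ≤ m)}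

/-- Iterated Cantor–Bendixson derivatives `𝓕^{(o)}`. -/
noncomputable def famDerivIter (𝓕 : Set (Finset ℕ)) (o : Ordinal.{0}) : Set (Finset ℕ) :=
  Ordinal.limitRecOn (motive := fun _ => Set (Finset ℕ)) o 𝓕
    (fun _ S => famDeriv S)
    (fun o _ ih => ⋂ (o' : Ordinal) (h : o' < o), ih o' h)

/-- One step of the standard representation: `A` is obtained from the remainder `R`
as `R ∩ [1, k]` where `k` is the largest element of `F` with `R ∩ [1, k] ∈ 𝓝`. -/
def stepOf (N : Set (Finset ℕ)) (F R A : Finset ℕ) : Prop :=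
  ∃ k ∈ F, A = R.filter (· ≤ k) ∧ A ∈ N ∧
    ∀ k' ∈ F, R.filter (· ≤ k') ∈ N → k' ≤ k

/-- `IsStdRepFrom N F R L`: starting from remainder `R`, the list `L` is produced by
the greedy recursion defining the standard representation, exhausting `R`. -/
def IsStdRepFrom (N : Set (Finset ℕ)) (F : Finset ℕ) : Finset ℕ → List (Finset ℕ) → Prop
  | R, [] => R = ∅
  | R, A :: L => stepOf N F R A ∧ IsStdRepFrom N F (R \ A) L

/-- `L` is the standard representation of `F` (as an element of `𝓜[𝓝]`). -/
def IsStdRep (N : Set (Finset ℕ)) (F : Finset ℕ) (L : List (Finset ℕ)) : Prop :=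
  IsStdRepFrom N F F L

section Trees

variable {X : Type*}

/-- A tree on `X`: a set of nonempty finite sequences closed under nonempty initial
segments. -/
def IsTree (T : Set (List X)) : Prop :=
  ∀ l ∈ T, l ≠ [] ∧ ∀ m : ℕ, 0 < m → m < l.length → l.take m ∈ T

/-- A tree is well-founded if it has no infinite branch. -/
def WellFoundedTree (T : Set (List X)) : Prop :=
  ¬ ∃ f : ℕ → X, ∀ n : ℕ, (List.ofFn fun i : Fin (n + 1) => f i) ∈ T

/-- The derived tree `D(T)`. -/
def treeDeriv (T : Set (List X)) : Set (List X) :=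
  {l | l ∈ T ∧ ∃ x : X, l ++ [x] ∈ T}

/-- Iterated derived trees `D^o(T)`. -/
noncomputable def treeDerivIter (T : Set (List X)) (o : Ordinal.{0}) : Set (List X) :=
  Ordinal.limitRecOn (motive := fun _ => Set (List X)) o T
    (fun _ S => treeDeriv S)
    (fun o _ ih => ⋂ (o' : Ordinal) (h : o' < o), ih o' h)

/-- The order `o(T)` of a (well-founded) tree. -/
noncomputable def treeOrder (T : Set (List X)) : Ordinal.{0} :=
  sInf {o : Ordinal | treeDerivIter T o = ∅}

end Trees

section Banach

variable (X : Type) [NormedAddCommGroup X] [NormedSpace ℝ X]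

/-- `cs` witnesses that the node `l` is a finite block basis of `(e_i)`: each entry
of `l` is the (finite, nonzero) linear combination of the `e_i` given by the
corresponding entry of `cs`, and the supports are successive. -/
def IsBlockNode (e : ℕ → X) (l : List X) (cs : List (ℕ →₀ ℝ)) : Prop :=
  cs.length = l.length ∧
  (∀ (i : ℕ) (h : i < cs.length) (h' : i < l.length),
    l.get ⟨i, h'⟩ = (cs.get ⟨i, h⟩).sum fun n r => r • e n) ∧
  (∀ c ∈ cs, c ≠ 0) ∧
  cs.Chain' fun c d => finLT c.support d.support

/-- `e` is a (Schauder) basis of `X`. -/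
def IsSchauderBasis (e : ℕ → X) : Prop :=
  ∀ x : X, ∃! a : ℕ → ℝ,
    Tendsto (fun n => ∑ i ∈ Finset.range n, a i • e i) atTop (𝓝 x)

/-- An `ℓ¹`-`K` tree on `X`: a tree on the unit sphere of `X` such that every node
`(x₁, …, x_n)` satisfies `‖∑ aᵢ xᵢ‖ ≥ K⁻¹ ∑ |aᵢ|`. -/
def IsL1Tree (K : ℝ) (T : Set (List X)) : Prop :=
  IsTree T ∧ ∀ l ∈ T, (∀ x ∈ l, ‖x‖ = 1) ∧
    ∀ a : Fin l.length → ℝ, K⁻¹ * ∑ i, |a i| ≤ ‖∑ i : Fin l.length, a i • l.get i‖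

/-- `I(X, K)`: the supremum of the orders of well-founded `ℓ¹`-`K` trees on `X`. -/
noncomputable def bourgainIndexK (K : ℝ) : Ordinal.{0} :=
  ⨆ T : {T : Set (List X) // IsL1Tree X K T ∧ WellFoundedTree T}, treeOrder T.1

/-- The Bourgain `ℓ¹`-index `I(X) = sup_{1 ≤ K < ∞} I(X, K)`. -/
noncomputable def bourgainIndex : Ordinal.{0} :=
  ⨆ K : {K : ℝ // 1 ≤ K}, bourgainIndexK X K.1

/-- `I_b(X, K)` relative to the basis `e`: the supremum of the orders of
well-founded `ℓ¹`-`K` block trees on `X`. -/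
noncomputable def blockIndexK (e : ℕ → X) (K : ℝ) : Ordinal.{0} :=
  ⨆ T : {T : Set (List X) //
      IsL1Tree X K T ∧ (∀ l ∈ T, ∃ cs, IsBlockNode X e l cs) ∧ WellFoundedTree T},
    treeOrder T.1

/-- The block `ℓ¹`-index `I_b(X) = sup_{1 ≤ K < ∞} I_b(X, K)`. -/
noncomputable def blockIndex (e : ℕ → X) : Ordinal.{0} :=
  ⨆ K : {K : ℝ // 1 ≤ K}, blockIndexK X e K.1

end Banach

/-! ### Auxiliary lemmas for Statement 18 -/

section Aux18

lemma minOf_mem {E : Finset ℕ} (hE : E.Nonempty) : minOf E ∈ E := by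
  have : (E : Set ℕ).Nonempty := by exact_mod_cast hE
  exact_mod_cast Nat.sInf_mem this

lemma minOf_le {E : Finset ℕ} {b : ℕ} (hb : b ∈ E) : minOf E ≤ b :=
  Nat.sInf_le (by exact_mod_cast hb)

lemma mem_foldr_subset : ∀ {l : List (Finset ℕ)} {E : Finset ℕ}, E ∈ l →
    E ⊆ l.foldr (· ∪ ·) ∅ := by
  intro l
  induction l with
  | nil => intro E h; simp at h
  | cons A l ih =>
    intro E h
    rcases List.mem_cons.mp h with h | h
    · subst h; exact fun n hn => by simp [List.foldr]; exact Or.inl hn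
    · exact fun n hn => by simp [List.foldr]; exact Or.inr (ih h hn)

lemma image_foldr (g : ℕ → ℕ) : ∀ l : List (Finset ℕ),
    (l.foldr (· ∪ ·) ∅).image g = (l.map (·.image g)).foldr (· ∪ ·) ∅ := by
  intro l
  induction l with
  | nil => simp
  | cons A l ih => simp [List.foldr, Finset.image_union, ih]

lemma minOf_image {E : Finset ℕ} {g : ℕ → ℕ} (hE : E.Nonempty)
    (hg : MonotoneOn g (E : Set ℕ)) : minOf (E.image g) = g (minOf E) := by
  have hmem : minOf E ∈ E := minOf_mem hE
  apply le_antisymm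
  · exact minOf_le (Finset.mem_image_of_mem g hmem)
  · have h2 : minOf (E.image g) ∈ E.image g := minOf_mem (hE.image g)
    obtain ⟨b, hb, hbe⟩ := Finset.mem_image.mp h2
    rw [← hbe]
    exact hg hmem hb (minOf_le hb)

lemma spreading_schreierZero : Spreading schreierZero := by
  intro A hA g _ _
  exact le_trans (Finset.card_image_le) hA

lemma spreading_schreierOne : Spreading schreierOne := by
  intro A hA g hg hge
  rcases A.eq_empty_or_nonempty with rfl | hne
  · simpa using hA
  · have h1 : (A.image g).card ≤ A.card := Finset.card_image_le
    have h2 : minOf A ≤ minOf (A.image g) := by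
      rw [minOf_image hne hg.monotoneOn]
      exact le_trans (minOf_le (minOf_mem hne)) (hge _ (minOf_mem hne))
    exact le_trans h1 (le_trans hA h2)

lemma finLT_image {E F : Finset ℕ} {g : ℕ → ℕ} {A : Finset ℕ}
    (hg : StrictMonoOn g (A : Set ℕ)) (hE : E ⊆ A) (hF : F ⊆ A)
    (h : finLT E F) : finLT (E.image g) (F.image g) := by
  intro a ha b hb
  obtain ⟨a', ha', rfl⟩ := Finset.mem_image.mp ha
  obtain ⟨b', hb', rfl⟩ := Finset.mem_image.mp hb
  exact hg (hE ha') (hF hb') (h a' ha' b' hb')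

lemma chain'_map_image {l : List (Finset ℕ)} {g : ℕ → ℕ} {A : Finset ℕ}
    (hg : StrictMonoOn g (A : Set ℕ)) (hsub : ∀ E ∈ l, E ⊆ A)
    (hc : l.Chain' finLT) : (l.map (·.image g)).Chain' finLT := by
  induction l with
  | nil => simpa using hc
  | cons E l ih =>
    rw [List.map_cons]; unfold List.Chain' at hc ⊢; rw [List.isChain_cons]
    rw [List.isChain_cons] at hc
    refine ⟨?_, ih (fun F hF => hsub F (List.mem_cons_of_mem _ hF)) hc.2⟩
    intro y hy
    rw [List.head?_map] at hy
    obtain ⟨F, hF, rfl⟩ := Option.map_eq_some_iff.mp hy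
    have hFl : F ∈ l := List.mem_of_mem_head? hF
    exact finLT_image hg (hsub E (List.mem_cons_self (a := E) (l := l)))
      (hsub F (List.mem_cons_of_mem _ hFl)) (hc.1 F hF)

lemma spreading_famComp {M N : Set (Finset ℕ)} (hM : Spreading M) (hN : Spreading N) :
    Spreading (famComp M N) := by
  intro A hA g hg hge
  obtain ⟨l, ⟨hne, hchain, hmins⟩, hmem, rfl⟩ := hA
  set A : Finset ℕ := l.foldr (· ∪ ·) ∅ with hAdef
  refine ⟨l.map (·.image g), ⟨?_, ?_, ?_⟩, ?_, ?_⟩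
  · intro E hE
    obtain ⟨F, hF, rfl⟩ := List.mem_map.mp hE
    exact (hne F hF).image g
  · exact chain'_map_image hg (fun E hE => mem_foldr_subset hE) hchain
  · have hminA : ∀ u ∈ (l.map minOf).toFinset, u ∈ A := by
      intro u hu
      rw [List.mem_toFinset, List.mem_map] at hu
      obtain ⟨E, hE, rfl⟩ := hu
      exact mem_foldr_subset hE (minOf_mem (hne E hE))
    have hmap : (l.map (·.image g)).map minOf = (l.map minOf).map g := by
      rw [List.map_map, List.map_map]
      apply List.map_congr_left
      intro E hE
      simp only [Function.comp_apply]
      exact minOf_image (hne E hE)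
        (hg.monotoneOn.mono (by exact_mod_cast mem_foldr_subset hE))
    rw [hmap]
    have htf : ((l.map minOf).map g).toFinset = (l.map minOf).toFinset.image g := by
      ext n; simp [Function.comp]
    rw [htf]
    apply hM _ hmins g
    · intro u hu v hv huv
      exact hg (hminA u (Finset.mem_coe.mp hu)) (hminA v (Finset.mem_coe.mp hv)) huv
    · intro u hu
      exact hge u (hminA u hu)
  · intro E hE
    obtain ⟨F, hF, rfl⟩ := List.mem_map.mp hE
    exact hN F (hmem F hF) g
      (hg.mono (by exact_mod_cast mem_foldr_subset hF))
      (fun a ha => hge a (mem_foldr_subset hF ha))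
  · exact image_foldr g l

lemma schreier_zero (seq : Ordinal → ℕ → Ordinal) : schreier seq 0 = schreierZero :=
  Ordinal.limitRecOn_zero (motive := fun _ => Set (Finset ℕ)) _ _ _

lemma schreier_succ (seq : Ordinal → ℕ → Ordinal) (o : Ordinal) :
    schreier seq (Order.succ o) = famComp schreierOne (schreier seq o) :=
  Ordinal.limitRecOn_succ (motive := fun _ => Set (Finset ℕ)) _ _ _ _

lemma schreier_limit (seq : Ordinal → ℕ → Ordinal) {o : Ordinal} (ho : Order.IsSuccLimit o) :
    schreier seq o =
      {F | ∃ n : ℕ, n ≤ F.card ∧ ∃ _ : seq o n < o, F ∈ schreier seq (seq o n)} :=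
  Ordinal.limitRecOn_limit (motive := fun _ => Set (Finset ℕ)) _ _ _ _ ho

lemma spreading_schreier (seq : Ordinal → ℕ → Ordinal) (o : Ordinal) :
    Spreading (schreier seq o) := by
  induction o using Ordinal.limitRecOn with
  | zero => rw [schreier_zero]; exact spreading_schreierZero
  | add_one o ih => rw [Ordinal.add_one_eq_succ, schreier_succ]; exact spreading_famComp spreading_schreierOne ih
  | limit o ho ih =>
    rw [schreier_limit seq ho]
    intro A hA g hg hge
    obtain ⟨n, hn, hlt, hmem⟩ := hA
    refine ⟨n, ?_, hlt, ih _ hlt A hmem g hg hge⟩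
    rwa [Finset.card_image_of_injOn hg.injOn]

/-! ### The spreading map θ -/

noncomputable def theta18 (F K : Finset ℕ) (a : ℕ) : ℕ :=
  if h : ∃ k ∈ K, a ≤ k then
    sInf {k | k ∈ K ∧ a ≤ k} -
      (F.filter (fun b => a < b ∧ b ≤ sInf {k | k ∈ K ∧ a ≤ k})).card
  else a

lemma theta18_ge (F K : Finset ℕ) (a : ℕ) : a ≤ theta18 F K a := by
  unfold theta18
  split
  · rename_i h
    obtain ⟨k, hk, hak⟩ := h
    set κ := sInf {k | k ∈ K ∧ a ≤ k} with hκdef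
    have hκ : κ ∈ {k | k ∈ K ∧ a ≤ k} := Nat.sInf_mem ⟨k, hk, hak⟩
    have hsub : F.filter (fun b => a < b ∧ b ≤ κ) ⊆ Finset.Ioc a κ := by
      intro b hb
      rw [Finset.mem_filter] at hb
      exact Finset.mem_Ioc.mpr hb.2
    have hcard : (F.filter (fun b => a < b ∧ b ≤ κ)).card ≤ κ - a := by
      calc _ ≤ (Finset.Ioc a κ).card := Finset.card_le_card hsub
        _ = κ - a := Nat.card_Ioc a κ
    have := hκ.2
    omega
  · exact le_rfl

lemma theta18_strictMonoOn (F K : Finset ℕ) {a b : ℕ} (hb : b ∈ F) (hab : a < b) :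
    theta18 F K a < theta18 F K b := by
  by_cases hea : ∃ k ∈ K, a ≤ k
  · obtain ⟨k₀, hk₀, hak₀⟩ := hea
    set κa := sInf {k | k ∈ K ∧ a ≤ k} with hκadef
    have hκa : κa ∈ {k | k ∈ K ∧ a ≤ k} := Nat.sInf_mem ⟨k₀, hk₀, hak₀⟩
    have hθa : theta18 F K a = κa - (F.filter (fun x => a < x ∧ x ≤ κa)).card := by
      unfold theta18; rw [dif_pos ⟨k₀, hk₀, hak₀⟩]
    by_cases heb : ∃ k ∈ K, b ≤ k
    · obtain ⟨k₁, hk₁, hbk₁⟩ := heb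
      set κb := sInf {k | k ∈ K ∧ b ≤ k} with hκbdef
      have hκb : κb ∈ {k | k ∈ K ∧ b ≤ k} := Nat.sInf_mem ⟨k₁, hk₁, hbk₁⟩
      have hθb : theta18 F K b = κb - (F.filter (fun x => b < x ∧ x ≤ κb)).card := by
        unfold theta18; rw [dif_pos ⟨k₁, hk₁, hbk₁⟩]
      have hκab : κa ≤ κb := Nat.sInf_le (show κb ∈ {k | k ∈ K ∧ a ≤ k} from ⟨hκb.1, le_trans (le_of_lt hab) hκb.2⟩)
      rcases eq_or_lt_of_le hκab with heq | hlt
      · -- κa = κb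
        rw [hθa, hθb, ← heq]
        have hsub : F.filter (fun x => b < x ∧ x ≤ κa) ⊆
            F.filter (fun x => a < x ∧ x ≤ κa) := by
          intro y hy
          rw [Finset.mem_filter] at hy ⊢
          exact ⟨hy.1, lt_trans hab hy.2.1, hy.2.2⟩
        have hbmem : b ∈ F.filter (fun x => a < x ∧ x ≤ κa) := by
          rw [Finset.mem_filter]
          exact ⟨hb, hab, heq ▸ hκb.2⟩
        have hbnot : b ∉ F.filter (fun x => b < x ∧ x ≤ κa) := by
          rw [Finset.mem_filter]; intro h; exact lt_irrefl b h.2.1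
        have hclt : (F.filter (fun x => b < x ∧ x ≤ κa)).card <
            (F.filter (fun x => a < x ∧ x ≤ κa)).card :=
          Finset.card_lt_card ((Finset.ssubset_iff_of_subset hsub).mpr
            ⟨b, hbmem, hbnot⟩)
        have hcle : (F.filter (fun x => a < x ∧ x ≤ κa)).card ≤ κa - a := by
          calc _ ≤ (Finset.Ioc a κa).card := by
                apply Finset.card_le_card
                intro y hy
                rw [Finset.mem_filter] at hy
                exact Finset.mem_Ioc.mpr hy.2
            _ = κa - a := Nat.card_Ioc a κa
        have := hκa.2
        omega
      · -- κa < κb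
        have hbκa : κa < b := by
          by_contra hcon
          push_neg at hcon
          exact absurd (Nat.sInf_le (s := {k | k ∈ K ∧ b ≤ k}) ⟨hκa.1, hcon⟩)
            (not_le.mpr hlt)
        have h1 : theta18 F K a ≤ κa := by rw [hθa]; omega
        exact lt_of_le_of_lt h1 (lt_of_lt_of_le hbκa (theta18_ge F K b))
    · -- no k ≥ b
      have hθb : theta18 F K b = b := by unfold theta18; rw [dif_neg heb]
      have hκab : κa < b := by
        by_contra hcon
        push_neg at hcon
        exact heb ⟨κa, hκa.1, hcon⟩
      have h1 : theta18 F K a ≤ κa := by rw [hθa]; omega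
      rw [hθb]; omega
  · -- no k ≥ a, then also no k ≥ b
    have heb : ¬ ∃ k ∈ K, b ≤ k := by
      intro ⟨k, hk, hbk⟩
      exact hea ⟨k, hk, le_trans (le_of_lt hab) hbk⟩
    have h1 : theta18 F K a = a := by unfold theta18; rw [dif_neg hea]
    have h2 : theta18 F K b = b := by unfold theta18; rw [dif_neg heb]
    omega

lemma theta18_hits (F K : Finset ℕ) {a ki : ℕ}
    (hmax : ∀ b ∈ F, b ≤ ki → b ≤ a) (haki : a ≤ ki) (hki : ki ∈ K)
    (hlow : ∀ k' ∈ K, k' < ki → k' < a) : theta18 F K a = ki := by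
  have hex : ∃ k ∈ K, a ≤ k := ⟨ki, hki, haki⟩
  have hκ : sInf {k | k ∈ K ∧ a ≤ k} = ki := by
    apply le_antisymm (Nat.sInf_le (show ki ∈ {k | k ∈ K ∧ a ≤ k} from ⟨hki, haki⟩))
    have hmem : sInf {k | k ∈ K ∧ a ≤ k} ∈ {k | k ∈ K ∧ a ≤ k} :=
      Nat.sInf_mem ⟨ki, hki, haki⟩
    by_contra hcon
    push_neg at hcon
    exact absurd hmem.2 (not_le.mpr (hlow _ hmem.1 hcon))
  have hfilt : F.filter (fun b => a < b ∧ b ≤ sInf {k | k ∈ K ∧ a ≤ k}) = ∅ := by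
    rw [Finset.filter_eq_empty_iff]
    intro b hbF hcon
    rw [hκ] at hcon
    exact absurd (hmax b hbF hcon.2) (not_le.mpr hcon.1)
  unfold theta18
  rw [dif_pos hex, hfilt, hκ]
  simp

/-! ### Norm basics -/

lemma sigmaF_nonneg (F : Finset ℕ) (y : ℕ →₀ ℝ) : 0 ≤ sigmaF F y :=
  Finset.sum_nonneg fun _ _ => abs_nonneg _

lemma sigmaF_le_support (F : Finset ℕ) (y : ℕ →₀ ℝ) :
    sigmaF F y ≤ sigmaF y.support y := by
  unfold sigmaF
  classical
  have h1 : ∑ n ∈ F, |y n| = ∑ n ∈ F.filter (· ∈ y.support), |y n| := by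
    rw [Finset.sum_filter_of_ne]
    intro n _ hn
    rw [Finsupp.mem_support_iff]
    intro hc
    exact hn (by rw [hc, abs_zero])
  rw [h1]
  apply Finset.sum_le_sum_of_subset_of_nonneg
  · intro n hn; exact (Finset.mem_filter.mp hn).2
  · intro _ _ _; exact abs_nonneg _

lemma famNorm_bddAbove (𝓕 : Set (Finset ℕ)) (y : ℕ →₀ ℝ) :
    BddAbove {r : ℝ | ∃ F ∈ 𝓕, r = sigmaF F y} := by
  refine ⟨sigmaF y.support y, ?_⟩
  rintro r ⟨F, _, rfl⟩
  exact sigmaF_le_support F y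

lemma sigmaF_le_famNorm {𝓕 : Set (Finset ℕ)} {F : Finset ℕ} (hF : F ∈ 𝓕)
    (y : ℕ →₀ ℝ) : sigmaF F y ≤ famNorm 𝓕 y :=
  le_csSup (famNorm_bddAbove 𝓕 y) ⟨F, hF, rfl⟩

end Aux18

/-- final Remark of the paper: in the Schreier space `X_α`, if
`(x_i)_{i=1}^p` is a normalized block basis of the unit vector basis `(e_k)` and
`k_i = max supp x_i`, then `‖∑ a_i x_i‖ ≤ ‖∑ a_i e_{k_i}‖` for all scalars. -/
theorem statement18 (seq : Ordinal → ℕ → Ordinal) (hseq : IsCtblLadder seq)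
    (a : Ordinal) (ha : a.card ≤ Cardinal.aleph0)
    (p : ℕ) (x : Fin p → (ℕ →₀ ℝ))
    (hx0 : ∀ i, x i ≠ 0)
    (hblock : ∀ i j : Fin p, i < j → finLT (x i).support (x j).support)
    (hnorm : ∀ i, famNorm (schreier seq a) (x i) = 1)
    (c : Fin p → ℝ) :
    famNorm (schreier seq a) (∑ i, c i • x i) ≤
      famNorm (schreier seq a)
        (∑ i, c i • Finsupp.single ((x i).support.sup id) (1 : ℝ)) := by
  classical
  have hsuppne : ∀ i, (x i).support.Nonempty :=
    fun i => Finsupp.support_nonempty_iff.mpr (hx0 i)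
  suffices key : ∀ k : Fin p → ℕ, (∀ i, k i ∈ (x i).support) →
      (∀ (i : Fin p) (n : ℕ), n ∈ (x i).support → n ≤ k i) →
      famNorm (schreier seq a) (∑ i, c i • x i) ≤
        famNorm (schreier seq a) (∑ i, c i • Finsupp.single (k i) (1 : ℝ)) by
    apply key
    · intro i
      rw [← Finset.sup'_eq_sup (hsuppne i), ← Finset.max'_eq_sup']
      exact Finset.max'_mem _ _
    · intro i n hn
      exact Finset.le_sup (f := id) hn
  intro k hkmem hkle
  set 𝓕 := schreier seq a with h𝓕
  set z : ℕ →₀ ℝ := ∑ i, c i • Finsupp.single (k i) (1 : ℝ) with hz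
  have hkmono : ∀ i j : Fin p, i < j → k i < k j := fun i j hij =>
    hblock i j hij (k i) (hkmem i) (k j) (hkmem j)
  have hkinj : Function.Injective k := by
    intro i j hij
    rcases lt_trichotomy i j with h | h | h
    · exact absurd hij (ne_of_lt (hkmono i j h))
    · exact h
    · exact absurd hij.symm (ne_of_lt (hkmono j i h))
  have hz_apply : ∀ i, z (k i) = c i := by
    intro i
    rw [hz, Finsupp.finset_sum_apply]
    have heach : ∀ j : Fin p,
        (c j • Finsupp.single (k j) (1 : ℝ)) (k i) = if j = i then c j else 0 := by
      intro j
      rw [Finsupp.smul_apply, Finsupp.single_apply, _root_.smul_eq_mul]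
      by_cases h : j = i
      · rw [if_pos h, if_pos (by rw [h]), mul_one]
      · rw [if_neg h, if_neg (fun hc => h (hkinj hc)), mul_zero]
    rw [Finset.sum_congr rfl fun j _ => heach j, Finset.sum_ite_eq' Finset.univ i c,
      if_pos (Finset.mem_univ i)]
  have h0 : 0 ≤ famNorm 𝓕 z := by
    rcases Set.eq_empty_or_nonempty 𝓕 with he | ⟨F₀, hF₀⟩
    · have hset : {r : ℝ | ∃ F ∈ 𝓕, r = sigmaF F z} = ∅ := by
        rw [he]; ext r; simp
      unfold famNorm
      rw [hset, Real.sSup_empty]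
    · exact le_trans (sigmaF_nonneg F₀ z) (sigmaF_le_famNorm hF₀ z)
  have main : ∀ F ∈ 𝓕, sigmaF F (∑ i, c i • x i) ≤ famNorm 𝓕 z := by
    intro F hF
    set K : Finset ℕ := Finset.univ.image k with hK
    set θ : ℕ → ℕ := theta18 F K with hθ
    have hGmem : F.image θ ∈ 𝓕 := by
      apply spreading_schreier seq a F hF θ
      · intro u hu v hv huv
        exact theta18_strictMonoOn F K (Finset.mem_coe.mp hv) huv
      · intro u hu
        exact theta18_ge F K u
    set I : Finset (Fin p) :=
      Finset.univ.filter (fun i => ((x i).support ∩ F).Nonempty) with hI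
    have hkiG : ∀ i ∈ I, k i ∈ F.image θ := by
      intro i hi
      rw [hI, Finset.mem_filter] at hi
      have hi2 : ((x i).support ∩ F).Nonempty := hi.2
      obtain ⟨n₀, hn₀⟩ := hi2
      rw [Finset.mem_inter] at hn₀
      have hS : n₀ ∈ F.filter (· ≤ k i) :=
        Finset.mem_filter.mpr ⟨hn₀.2, hkle i n₀ hn₀.1⟩
      have hSne : (F.filter (· ≤ k i)).Nonempty := ⟨n₀, hS⟩
      set m := (F.filter (· ≤ k i)).max' hSne with hm
      have hmF : m ∈ F := (Finset.mem_filter.mp ((F.filter (· ≤ k i)).max'_mem hSne)).1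
      have hmki : m ≤ k i := (Finset.mem_filter.mp ((F.filter (· ≤ k i)).max'_mem hSne)).2
      have hθm : θ m = k i := by
        refine theta18_hits F K ?_ hmki (Finset.mem_image_of_mem k (Finset.mem_univ i)) ?_
        · intro b hbF hbki
          exact Finset.le_max' (F.filter (· ≤ k i)) b (Finset.mem_filter.mpr ⟨hbF, hbki⟩)
        · intro k' hk' hlt
          obtain ⟨j, _, rfl⟩ := Finset.mem_image.mp hk'
          have hji : j < i := by
            by_contra hc
            push_neg at hc
            rcases eq_or_lt_of_le hc with heq | hlt2
            · rw [heq] at hlt; exact lt_irrefl _ hlt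
            · exact absurd hlt (not_lt.mpr (le_of_lt (hkmono i j hlt2)))
          have hkjn : k j < n₀ := hblock j i hji (k j) (hkmem j) n₀ hn₀.1
          exact lt_of_lt_of_le hkjn (Finset.le_max' _ n₀ hS)
      exact Finset.mem_image.mpr ⟨m, hmF, hθm⟩
    have hy_apply : ∀ n, (∑ i, c i • x i) n = ∑ i, c i * (x i) n := by
      intro n
      rw [Finsupp.finset_sum_apply]
      exact Finset.sum_congr rfl fun j _ => by rw [Finsupp.smul_apply, _root_.smul_eq_mul]
    have hstepA : sigmaF F (∑ i, c i • x i) ≤ ∑ i ∈ I, |c i| := by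
      unfold sigmaF
      calc ∑ n ∈ F, |(∑ i, c i • x i) n| ≤ ∑ n ∈ F, ∑ i, |c i| * |(x i) n| := by
            apply Finset.sum_le_sum
            intro n _
            rw [hy_apply n]
            calc |∑ i, c i * (x i) n| ≤ ∑ i, |c i * (x i) n| :=
                  Finset.abs_sum_le_sum_abs _ _
              _ = ∑ i, |c i| * |(x i) n| :=
                  Finset.sum_congr rfl fun i _ => abs_mul _ _
        _ = ∑ i, |c i| * sigmaF F (x i) := by
            rw [Finset.sum_comm]
            exact Finset.sum_congr rfl fun i _ => by
              simp [sigmaF, Finset.mul_sum]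
        _ ≤ ∑ i, if ((x i).support ∩ F).Nonempty then |c i| else 0 := by
            apply Finset.sum_le_sum
            intro i _
            by_cases hi : ((x i).support ∩ F).Nonempty
            · rw [if_pos hi]
              have h1 : sigmaF F (x i) ≤ 1 := by
                rw [← hnorm i]; exact sigmaF_le_famNorm hF (x i)
              exact mul_le_of_le_one_right (abs_nonneg _) h1
            · rw [if_neg hi]
              have hzero : sigmaF F (x i) = 0 := by
                unfold sigmaF
                apply Finset.sum_eq_zero
                intro n hn
                rw [abs_eq_zero]
                by_contra hc
                exact hi ⟨n, Finset.mem_inter.mpr ⟨Finsupp.mem_support_iff.mpr hc, hn⟩⟩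
              rw [hzero, mul_zero]
        _ = ∑ i ∈ I, |c i| := by rw [hI, Finset.sum_filter]
    have hstepB : ∑ i ∈ I, |c i| ≤ sigmaF (F.image θ) z := by
      have h1 : ∑ i ∈ I, |c i| = ∑ i ∈ I, |z (k i)| :=
        Finset.sum_congr rfl fun i _ => by rw [hz_apply i]
      have h2 : ∑ n ∈ I.image k, |z n| = ∑ i ∈ I, |z (k i)| :=
        Finset.sum_image fun i _ j _ h => hkinj h
      rw [h1, ← h2]
      unfold sigmaF
      apply Finset.sum_le_sum_of_subset_of_nonneg
      · intro n hn
        obtain ⟨i, hi, rfl⟩ := Finset.mem_image.mp hn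
        exact hkiG i hi
      · intro _ _ _; exact abs_nonneg _
    exact le_trans hstepA (le_trans hstepB (sigmaF_le_famNorm hGmem z))
  unfold famNorm
  refine Real.sSup_le ?_ h0
  rintro r ⟨F, hF, rfl⟩
  exact main F hF

end LTIndex
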